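/- Let R : Y → ℝ be β-strongly convex with respect to a norm ‖·‖ on a convex set Y, and let η > 0. For vectors u₁, u₂, define y₁ = argmin_{y ∈ Y} ⟨y, u₁⟩ + (1/η)R(y) and y₂ = argmin_{y ∈ Y} ⟨y, u₂⟩ + (1/η)R(y). Then ‖y₁ − y₂‖ ≤ (η/β)‖u₁ − u₂‖_*. -/

import Mathlib

lemma key_growth {E : Type*} [NormedAddCommGroup E] [NormedSpace ℝ E]
    (Y : Set E) (hY : Convex ℝ Y)
    (R : E → ℝ) (R' : E → StrongDual ℝ E) (β η : ℝ) (hβ : 0 < β) (hη : 0 < η)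
    (hsc : ∀ u ∈ Y, ∀ v ∈ Y, R u ≥ R v + R' v (u - v) + β / 2 * ‖u - v‖ ^ 2)
    (u : StrongDual ℝ E) (a b : E) (ha : a ∈ Y) (hb : b ∈ Y)
    (hmin : ∀ y ∈ Y, u a + (1 / η) * R a ≤ u y + (1 / η) * R y) :
    β / (2 * η) * ‖b - a‖ ^ 2 ≤ u (b - a) + (1 / η) * (R b - R a) := by
  set d := ‖b - a‖ with hd
  have hd0 : 0 ≤ d := norm_nonneg _
  have hη' : (0:ℝ) < 1 / η := by positivity
  have main : ∀ t : ℝ, 0 < t → t ≤ 1 →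
      β / (2 * η) * ((1 - t) * d ^ 2) ≤ u (b - a) + (1 / η) * (R b - R a) := by
    intro t ht0 ht1
    set c := a + t • (b - a) with hc
    have hcY : c ∈ Y := by
      have h := hY ha hb (by linarith : (0:ℝ) ≤ 1 - t) (le_of_lt ht0) (by ring)
      have he : (1 - t) • a + t • b = c := by rw [hc]; module
      rwa [he] at h
    have hac : a - c = (-t) • (b - a) := by rw [hc]; module
    have hbc : b - c = (1 - t) • (b - a) := by rw [hc]; module
    have h1 := hsc a ha c hcY
    have h2 := hsc b hb c hcY
    rw [hac] at h1
    rw [hbc] at h2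
    have e1 : R' c ((-t) • (b - a)) = (-t) * R' c (b - a) := by
      rw [map_smul]; rfl
    have e2 : R' c ((1 - t) • (b - a)) = (1 - t) * R' c (b - a) := by
      rw [map_smul]; rfl
    have n1 : ‖(-t) • (b - a)‖ = t * d := by
      rw [norm_smul, Real.norm_eq_abs, abs_neg, abs_of_pos ht0]
    have n2 : ‖(1 - t) • (b - a)‖ = (1 - t) * d := by
      rw [norm_smul, Real.norm_eq_abs, abs_of_nonneg (by linarith)]
    rw [e1, n1] at h1
    rw [e2, n2] at h2
    have hmc := hmin c hcY
    have euc : u c = u a + t * u (b - a) := by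
      rw [hc, map_add, map_smul]; rfl
    rw [euc] at hmc
    set g := R' c (b - a) with hg
    -- h1 : R a ≥ R c + (-t) * g + β/2 * (t*d)^2
    -- h2 : R b ≥ R c + (1-t) * g + β/2 * ((1-t)*d)^2
    have H1 : (1 - t) * (R c + (-t) * g + β / 2 * (t * d) ^ 2) ≤ (1 - t) * R a :=
      mul_le_mul_of_nonneg_left h1 (by linarith)
    have H2 : t * (R c + (1 - t) * g + β / 2 * ((1 - t) * d) ^ 2) ≤ t * R b :=
      mul_le_mul_of_nonneg_left h2 (le_of_lt ht0)
    have hRc : R c ≤ (1 - t) * R a + t * R b - β / 2 * (t * (1 - t)) * d ^ 2 := by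
      nlinarith [H1, H2]
    have hRc' := mul_le_mul_of_nonneg_left hRc (le_of_lt hη')
    -- hmc : u a + (1/η) * R a ≤ u a + t * u (b - a) + (1/η) * R c
    have hfin : t * ((1 / η) * (R a - R b) + β / (2 * η) * ((1 - t) * d ^ 2)) ≤
        t * (u (b - a)) := by
      have hdiv : β / (2 * η) = (1 / η) * (β / 2) := by ring
      nlinarith [hmc, hRc']
    have hA := le_of_mul_le_mul_left (by linarith [hfin] :
        t * ((1 / η) * (R a - R b) + β / (2 * η) * ((1 - t) * d ^ 2)) ≤ t * u (b - a)) ht0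
    linarith [hA]
  apply le_of_forall_pos_le_add
  intro ε hε
  by_cases hdz : d = 0
  · have h := main 1 one_pos le_rfl
    rw [hdz]
    rw [hdz] at h
    simp only [ne_eq, OfNat.ofNat_ne_zero, not_false_eq_true, zero_pow, mul_zero] at h ⊢
    nlinarith [h]
  · have hdp : 0 < d := lt_of_le_of_ne hd0 (Ne.symm hdz)
    have hβd : 0 < β * d ^ 2 := by positivity
    set t := min 1 (2 * η * ε / (β * d ^ 2)) with htdef
    have ht0 : 0 < t := lt_min one_pos (by positivity)
    have ht1 : t ≤ 1 := min_le_left _ _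
    have h := main t ht0 ht1
    have ht2 : t * (β * d ^ 2) ≤ 2 * η * ε := by
      calc t * (β * d ^ 2) ≤ (2 * η * ε / (β * d ^ 2)) * (β * d ^ 2) :=
            mul_le_mul_of_nonneg_right (min_le_right _ _) hβd.le
        _ = 2 * η * ε := div_mul_cancel₀ _ hβd.ne'
    have hsmall : β / (2 * η) * (t * d ^ 2) ≤ ε := by
      rw [div_mul_eq_mul_div, div_le_iff₀ (by positivity : (0:ℝ) < 2 * η)]
      nlinarith [ht2]
    have hsplit : β / (2 * η) * d ^ 2 =
        β / (2 * η) * ((1 - t) * d ^ 2) + β / (2 * η) * (t * d ^ 2) := by ring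
    linarith [h, hsmall]

/-- Stability of regularized-leader minimizers: if `R` is `β`-strongly convex w.r.t. `‖·‖`
on a convex set `Y`, and `y₁, y₂` minimize `⟨y, u₁⟩ + R y / η` resp. `⟨y, u₂⟩ + R y / η`
over `Y`, then `‖y₁ − y₂‖ ≤ (η/β) ‖u₁ − u₂‖_*` (dual/operator norm). -/
theorem stmt_6 {E : Type*} [NormedAddCommGroup E] [NormedSpace ℝ E]
    (Y : Set E) (hY : Convex ℝ Y)
    (R : E → ℝ) (R' : E → StrongDual ℝ E) (β η : ℝ) (hβ : 0 < β) (hη : 0 < η)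
    (hsc : ∀ u ∈ Y, ∀ v ∈ Y, R u ≥ R v + R' v (u - v) + β / 2 * ‖u - v‖ ^ 2)
    (u₁ u₂ : StrongDual ℝ E) (y₁ y₂ : E)
    (hy₁ : y₁ ∈ Y ∧ ∀ y ∈ Y, u₁ y₁ + (1 / η) * R y₁ ≤ u₁ y + (1 / η) * R y)
    (hy₂ : y₂ ∈ Y ∧ ∀ y ∈ Y, u₂ y₂ + (1 / η) * R y₂ ≤ u₂ y + (1 / η) * R y) :
    ‖y₁ - y₂‖ ≤ (η / β) * ‖u₁ - u₂‖ := by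
  obtain ⟨h1Y, h1m⟩ := hy₁
  obtain ⟨h2Y, h2m⟩ := hy₂
  have k1 := key_growth Y hY R R' β η hβ hη hsc u₁ y₁ y₂ h1Y h2Y h1m
  have k2 := key_growth Y hY R R' β η hβ hη hsc u₂ y₂ y₁ h2Y h1Y h2m
  have e : y₂ - y₁ = -(y₁ - y₂) := by abel
  rw [e, map_neg, norm_neg] at k1
  set d := ‖y₁ - y₂‖ with hd
  have hd0 : 0 ≤ d := norm_nonneg _
  -- sum: (β/η) d^2 ≤ (u₂ - u₁)(y₁ - y₂)
  have hsum : β / η * d ^ 2 ≤ (u₂ - u₁) (y₁ - y₂) := by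
    rw [ContinuousLinearMap.sub_apply]
    have h2 : β / η * d ^ 2 = β / (2 * η) * d ^ 2 + β / (2 * η) * d ^ 2 := by ring
    linarith [k1, k2]
  have hop : (u₂ - u₁) (y₁ - y₂) ≤ ‖u₁ - u₂‖ * d := by
    have h1 := (u₂ - u₁).le_opNorm (y₁ - y₂)
    rw [Real.norm_eq_abs] at h1
    have h2 : ‖u₂ - u₁‖ = ‖u₁ - u₂‖ := norm_sub_rev _ _
    calc (u₂ - u₁) (y₁ - y₂) ≤ |(u₂ - u₁) (y₁ - y₂)| := le_abs_self _
      _ ≤ ‖u₂ - u₁‖ * d := h1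
      _ = ‖u₁ - u₂‖ * d := by rw [h2]
  have hN : 0 ≤ ‖u₁ - u₂‖ := norm_nonneg _
  rcases eq_or_lt_of_le hd0 with hdz | hdp
  · rw [← hdz]; positivity
  · -- (β/η) d^2 ≤ N d ⇒ d ≤ (η/β) N
    have hkey : β / η * d ^ 2 ≤ ‖u₁ - u₂‖ * d := le_trans hsum hop
    rw [div_mul_eq_mul_div, div_le_iff₀ hη] at hkey
    rw [div_mul_eq_mul_div, le_div_iff₀ hβ]
    nlinarith [hkey, hdp]
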